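/- For every n ≥ 1 and all p, a ∈ V_n with a ≠ 0, the symplectic transvection t_p fixes C_a setwise if and only if ⟨p,a⟩ = 0, and for all p, a ∈ V_n with p ≠ 0, t_p fixes H_a setwise if and only if Q_a(p) = 1. -/
import Mathlib


/-- The symplectic vector space `V_n = (ZMod 2)^(2n)` of the n-qubit real Pauli group. -/
abbrev V (n : ℕ) : Type := Fin (2 * n) → ZMod 2

/-- The index `2i-1` (0-based: `2i`). -/
def i0 {n : ℕ} (i : Fin n) : Fin (2 * n) := ⟨2 * i.1, by have := i.isLt; omega⟩

/-- The index `2i` (0-based: `2i+1`). -/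
def i1 {n : ℕ} (i : Fin n) : Fin (2 * n) := ⟨2 * i.1 + 1, by have := i.isLt; omega⟩

/-- The symplectic form `⟨x,y⟩ = Σ_{i=1}^n (x_{2i−1} y_{2i} + x_{2i} y_{2i−1})`. -/
def sform {n : ℕ} (x y : V n) : ZMod 2 :=
  ∑ i : Fin n, (x (i0 i) * y (i1 i) + x (i1 i) * y (i0 i))

/-- The point set `P = V_n \ {0}` of the incidence geometry `G_n`. -/
def P (n : ℕ) : Set (V n) := {x | x ≠ 0}

/-- The line set `L = {{a,b,a+b} : a,b ∈ P, a ≠ b, ⟨a,b⟩ = 0}` of `G_n`. -/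
def Lines (n : ℕ) : Set (Set (V n)) :=
  {l | ∃ a b : V n, a ∈ P n ∧ b ∈ P n ∧ a ≠ b ∧ sform a b = 0 ∧ l = {a, b, a + b}}

/-- A subset `H ⊆ P` satisfies condition (H1) if every line meets it in exactly
one point or is contained in it. -/
def IsH1 {n : ℕ} (H : Set (V n)) : Prop :=
  H ⊆ P n ∧ ∀ l ∈ Lines n, (H ∩ l).ncard = 1 ∨ l ⊆ H

/-- A geometric hyperplane: a subset satisfying (H1) which is not the full point set. -/
def IsHyperplane {n : ℕ} (H : Set (V n)) : Prop := IsH1 H ∧ H ≠ P n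

/-- `A ⊞ B`: the complement in `P` of the symmetric difference of `A` and `B`. -/
def boxAdd {n : ℕ} (A B : Set (V n)) : Set (V n) := P n \ (symmDiff A B)

/-- The quadratic form `Q_0(x) = Σ_{i=1}^n x_{2i−1} x_{2i}`. -/
def Q0 {n : ℕ} (x : V n) : ZMod 2 := ∑ i : Fin n, x (i0 i) * x (i1 i)

/-- The quadratic form `Q_p(x) = Q_0(x) + ⟨p,x⟩`. -/
def Qf {n : ℕ} (p x : V n) : ZMod 2 := Q0 x + sform p x

/-- The perp-set hyperplane `C_p = {x ∈ P : ⟨p,x⟩ = 0}`. -/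
def Cset {n : ℕ} (p : V n) : Set (V n) := {x ∈ P n | sform p x = 0}

/-- The quadric hyperplane `H_p = {x ∈ P : Q_p(x) = 0}`. -/
def Hset {n : ℕ} (p : V n) : Set (V n) := {x ∈ P n | Qf p x = 0}

/-- The symplectic transvection `t_p : x ↦ x + ⟨p,x⟩·p`. -/
def tv {n : ℕ} (p : V n) (x : V n) : V n := x + sform p x • p


section Aux
variable {n : ℕ}

lemma z2 : ∀ z : ZMod 2, z = 0 ∨ z = 1 := by decide
lemma z2sq : ∀ z : ZMod 2, z * z = z := by decide

lemma sform_symm (x y : V n) : sform x y = sform y x := by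
  unfold sform; apply Finset.sum_congr rfl; intros; ring

lemma sform_self (x : V n) : sform x x = 0 := by
  unfold sform
  have h : ∀ i ∈ Finset.univ, x (i0 i) * x (i1 i) + x (i1 i) * x (i0 i) = (0 : ZMod 2) := by
    intro i _; rw [mul_comm]; exact CharTwo.add_self_eq_zero _
  rw [Finset.sum_congr rfl h, Finset.sum_const, smul_zero]

lemma sform_add_right (p x y : V n) : sform p (x + y) = sform p x + sform p y := by
  unfold sform
  rw [← Finset.sum_add_distrib]
  apply Finset.sum_congr rfl; intros; simp only [Pi.add_apply]; ring

lemma sform_smul_right (p : V n) (c : ZMod 2) (x : V n) : sform p (c • x) = c * sform p x := by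
  unfold sform
  rw [Finset.mul_sum]
  apply Finset.sum_congr rfl; intros; simp only [Pi.smul_apply, smul_eq_mul]; ring

lemma sform_zero_right (p : V n) : sform p 0 = 0 := by
  unfold sform; simp

lemma Q0_add (x y : V n) : Q0 (x + y) = Q0 x + Q0 y + sform x y := by
  unfold Q0 sform
  rw [← Finset.sum_add_distrib, ← Finset.sum_add_distrib]
  apply Finset.sum_congr rfl; intros; simp only [Pi.add_apply]; ring

lemma Q0_smul (c : ZMod 2) (x : V n) : Q0 (c • x) = c * Q0 x := by
  unfold Q0
  rw [Finset.mul_sum]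
  apply Finset.sum_congr rfl; intro i _
  simp only [Pi.smul_apply, smul_eq_mul]
  calc c * x (i0 i) * (c * x (i1 i)) = c * c * (x (i0 i) * x (i1 i)) := by ring
    _ = c * (x (i0 i) * x (i1 i)) := by rw [z2sq]

lemma sform_tv (a p x : V n) : sform a (tv p x) = sform a x + sform p x * sform a p := by
  unfold tv
  rw [sform_add_right, sform_smul_right]

lemma tv_tv (p x : V n) : tv p (tv p x) = x := by
  have h := sform_tv p p x
  rw [sform_self, mul_zero, add_zero] at h
  show tv p x + sform p (tv p x) • p = x
  rw [h]
  show x + sform p x • p + sform p x • p = x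
  rw [add_assoc, ← add_smul, CharTwo.add_self_eq_zero, zero_smul, add_zero]

lemma tv_zero (p : V n) : tv p (0 : V n) = 0 := by
  show (0 : V n) + sform p 0 • p = 0
  rw [sform_zero_right, zero_smul, add_zero]

lemma tv_ne_zero (p : V n) {x : V n} (hx : x ≠ 0) : tv p x ≠ 0 := by
  intro h
  apply hx
  have := tv_tv p x
  rw [h, tv_zero] at this
  exact this.symm

lemma Qf_tv (a p x : V n) : Qf a (tv p x) = Qf a x + sform p x * (Qf a p + 1) := by
  unfold Qf tv
  rw [Q0_add, Q0_smul, sform_add_right, sform_smul_right, sform_smul_right, sform_symm x p]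
  have h := z2sq (sform p x)
  calc Q0 x + sform p x * Q0 p + sform p x * sform p x + (sform a x + sform p x * sform a p)
      = Q0 x + sform a x + sform p x * (Q0 p + sform a p) + sform p x * sform p x := by ring
    _ = Q0 x + sform a x + sform p x * ((Q0 p + sform a p) + 1) := by rw [h]; ring

lemma Qf_add (a x y : V n) : Qf a (x + y) = Qf a x + Qf a y + sform x y := by
  unfold Qf
  rw [Q0_add, sform_add_right]; ring

lemma image_tv_eq (p : V n) (S : Set (V n)) (h : ∀ x ∈ S, tv p x ∈ S) : tv p '' S = S := by
  apply Set.Subset.antisymm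
  · rintro _ ⟨x, hx, rfl⟩; exact h x hx
  · intro x hx; exact ⟨tv p x, h x hx, tv_tv p x⟩

lemma ne01 (i b : Fin n) : i0 b ≠ i1 i := by
  simp only [i0, i1, ne_eq, Fin.mk.injEq]; omega

lemma sform_single1 (p : V n) (i : Fin n) : sform p (Pi.single (i1 i) 1) = p (i0 i) := by
  unfold sform
  rw [Finset.sum_eq_single i (fun b _ hb => by
      rw [Pi.single_eq_of_ne (fun h => hb (by
          simp only [i1, Fin.mk.injEq] at h; exact Fin.ext (by omega))),
        Pi.single_eq_of_ne (ne01 i b), mul_zero, mul_zero, add_zero])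
    (fun h => absurd (Finset.mem_univ i) h)]
  rw [Pi.single_eq_same, Pi.single_eq_of_ne (ne01 i i), mul_one, mul_zero, add_zero]

lemma sform_single0 (p : V n) (i : Fin n) : sform p (Pi.single (i0 i) 1) = p (i1 i) := by
  unfold sform
  rw [Finset.sum_eq_single i (fun b _ hb => by
      rw [Pi.single_eq_of_ne (fun h => hb (by
          simp only [i1, i0, Fin.mk.injEq] at h; exact Fin.ext (by omega))),
        Pi.single_eq_of_ne (fun h => (ne01 i b) (by
          simp only [i0, i1, Fin.mk.injEq] at h ⊢; omega)), mul_zero, mul_zero, add_zero])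
    (fun h => absurd (Finset.mem_univ i) h)]
  rw [Pi.single_eq_same, Pi.single_eq_of_ne (fun h => (ne01 i i) h.symm), mul_one, mul_zero,
    zero_add]

lemma exists_sform_one {p : V n} (hp : p ≠ 0) : ∃ x : V n, sform p x = 1 := by
  have hex : ∃ j, p j ≠ 0 := by
    by_contra h
    push_neg at h
    exact hp (funext fun j => h j)
  obtain ⟨j, hj⟩ := hex
  have hj1 : p j = 1 := (z2 (p j)).resolve_left hj
  have hjlt := j.isLt
  rcases Nat.even_or_odd j.1 with he | ho
  · have he' : j.1 % 2 = 0 := Nat.even_iff.mp he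
    have hji : j = i0 ⟨j.1 / 2, by omega⟩ := Fin.ext (by simp only [i0]; omega)
    exact ⟨Pi.single (i1 ⟨j.1 / 2, by omega⟩) 1, by rw [sform_single1, ← hji, hj1]⟩
  · have ho' : j.1 % 2 = 1 := Nat.odd_iff.mp ho
    have hji : j = i1 ⟨j.1 / 2, by omega⟩ := Fin.ext (by simp only [i1]; omega)
    exact ⟨Pi.single (i0 ⟨j.1 / 2, by omega⟩) 1, by rw [sform_single0, ← hji, hj1]⟩

end Aux

theorem stmt14 (n : ℕ) (hn : 1 ≤ n) :
    (∀ p a : V n, a ≠ 0 → (tv p '' Cset a = Cset a ↔ sform p a = 0)) ∧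
    (∀ p a : V n, p ≠ 0 → (tv p '' Hset a = Hset a ↔ Qf a p = 1)) := by
  constructor
  · intro p a ha
    constructor
    · intro him
      by_contra h
      have h1 : sform p a = 1 := (z2 (sform p a)).resolve_left h
      have haC : a ∈ Cset a := ⟨ha, sform_self a⟩
      have htC : tv p a ∈ Cset a := him ▸ Set.mem_image_of_mem _ haC
      have : sform a (tv p a) = 0 := htC.2
      rw [sform_tv, sform_self, sform_symm a p, h1] at this
      simp at this
    · intro h0
      apply image_tv_eq
      rintro x ⟨hx, hxa⟩
      refine ⟨tv_ne_zero p hx, ?_⟩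
      rw [sform_tv, hxa, sform_symm a p, h0, mul_zero, add_zero]
  · intro p a hp
    constructor
    · intro him
      by_contra h
      have h0 : Qf a p = 0 := (z2 (Qf a p)).resolve_right h
      obtain ⟨x0, hx0⟩ := exists_sform_one hp
      -- find x in Hset a with sform p x = 1
      have key : ∃ x, x ∈ Hset a ∧ sform p x = 1 := by
        rcases z2 (Qf a x0) with hq | hq
        · refine ⟨x0, ⟨?_, hq⟩, hx0⟩
          intro hz; rw [hz, sform_zero_right] at hx0; exact one_ne_zero hx0.symm
        · refine ⟨x0 + p, ⟨?_, ?_⟩, ?_⟩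
          · intro hz
            have : sform p (x0 + p) = 0 := by rw [hz, sform_zero_right]
            rw [sform_add_right, sform_self, add_zero, hx0] at this
            exact one_ne_zero this
          · rw [Qf_add, hq, h0, sform_symm x0 p, hx0]; decide
          · rw [sform_add_right, sform_self, add_zero, hx0]
      obtain ⟨x, hxH, hpx⟩ := key
      have htH : tv p x ∈ Hset a := him ▸ Set.mem_image_of_mem _ hxH
      have : Qf a (tv p x) = 0 := htH.2
      rw [Qf_tv, hxH.2, hpx, h0] at this
      simp at this
    · intro h1
      apply image_tv_eq
      rintro x ⟨hx, hxa⟩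
      refine ⟨tv_ne_zero p hx, ?_⟩
      rw [Qf_tv, hxa, h1]
      have h2 : (1 : ZMod 2) + 1 = 0 := by decide
      rw [h2, mul_zero, add_zero]
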